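/- Every graph in class A contains exactly one hole, and that hole has four vertices; moreover, every vertex outside that hole has at most two neighbors on it, so G contains no wheel. -/

import Mathlib

open SimpleGraph

/-- `G` contains an induced copy of `H`. -/
def ContainsInduced {V W : Type*} (G : SimpleGraph V) (H : SimpleGraph W) : Prop :=
  ∃ f : W ↪ V, ∀ u v, G.Adj (f u) (f v) ↔ H.Adj u v

/-- The path on 5 vertices. -/
def path5 : SimpleGraph (Fin 5) :=
  SimpleGraph.fromRel (fun i j => (i : ℕ) + 1 = (j : ℕ))

/-- Two disjoint edges. -/
def twoK2 : SimpleGraph (Fin 4) :=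
  SimpleGraph.fromRel (fun i j => (i = 0 ∧ j = 1) ∨ (i = 2 ∧ j = 3))

/-- The cycle on `n` vertices (for `n ≥ 3`). -/
def cycG (n : ℕ) : SimpleGraph (Fin n) :=
  SimpleGraph.fromRel (fun i j => ((i : ℕ) + 1) % n = (j : ℕ))

/-- `G` contains an induced wheel: an induced (chordless) cycle of length at least 4
plus a vertex with at least three neighbors on the cycle. -/
def ContainsWheel {V : Type*} (G : SimpleGraph V) : Prop :=
  ∃ n : ℕ, 4 ≤ n ∧ ∃ (f : Fin n ↪ V) (hub : V),
    (∀ i, hub ≠ f i) ∧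
    (∀ i j, G.Adj (f i) (f j) ↔ (cycG n).Adj i j) ∧
    3 ≤ {i : Fin n | G.Adj hub (f i)}.ncard

/-- `G` contains an induced wheel on at most `k` vertices. -/
def ContainsWheelLE {V : Type*} (G : SimpleGraph V) (k : ℕ) : Prop :=
  ∃ n : ℕ, 4 ≤ n ∧ n + 1 ≤ k ∧ ∃ (f : Fin n ↪ V) (hub : V),
    (∀ i, hub ≠ f i) ∧
    (∀ i j, G.Adj (f i) (f j) ↔ (cycG n).Adj i j) ∧
    3 ≤ {i : Fin n | G.Adj hub (f i)}.ncard

/-- `s` is the vertex set of a hole (induced cycle of length at least 4) of `G`. -/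
def IsHoleSet {V : Type*} (G : SimpleGraph V) (s : Set V) : Prop :=
  ∃ n : ℕ, 4 ≤ n ∧ ∃ f : Fin n ↪ V, Set.range f = s ∧
    ∀ i j, G.Adj (f i) (f j) ↔ (cycG n).Adj i j

/-- `G` is a split graph: its vertex set partitions into a stable set and a clique. -/
def IsSplit {V : Type*} (G : SimpleGraph V) : Prop :=
  ∃ S K : Set V, (∀ v, v ∈ S ∨ v ∈ K) ∧ S ∩ K = ∅ ∧
    (∀ u ∈ S, ∀ v ∈ S, ¬G.Adj u v) ∧ G.IsClique K

/-- Class A (see Maffray, "Graphs with no induced wheel or antiwheel"). -/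
def InClassA {V : Type*} (G : SimpleGraph V) : Prop :=
  ∃ (a b c d e : V) (X : Set V),
    X.Nonempty ∧
    (∀ v : V, v = a ∨ v = b ∨ v = c ∨ v = d ∨ v = e ∨ v ∈ X) ∧
    a ∉ X ∧ b ∉ X ∧ c ∉ X ∧ d ∉ X ∧ e ∉ X ∧
    a ≠ b ∧ a ≠ c ∧ a ≠ d ∧ a ≠ e ∧ b ≠ c ∧ b ≠ d ∧ b ≠ e ∧ c ≠ d ∧ c ≠ e ∧ d ≠ e ∧
    G.Adj a b ∧ G.Adj b c ∧ G.Adj c d ∧ G.Adj d a ∧ ¬G.Adj a c ∧ ¬G.Adj b d ∧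
    G.IsClique X ∧
    (∀ u ∈ X, G.Adj u c ∧ G.Adj u d ∧ ¬G.Adj u a ∧ ¬G.Adj u b) ∧
    (∀ u ∈ X, G.Adj e u) ∧ ¬G.Adj e a ∧ ¬G.Adj e b ∧ ¬(G.Adj e c ∧ G.Adj e d)

/-- Class B. -/
def InClassB {V : Type*} (G : SimpleGraph V) : Prop :=
  ∃ (X Y Z W : Set V) (x y : V),
    (∀ v : V, v ∈ X ∨ v ∈ Y ∨ v ∈ Z ∨ v ∈ W) ∧
    X ∩ Y = ∅ ∧ X ∩ Z = ∅ ∧ X ∩ W = ∅ ∧ Y ∩ Z = ∅ ∧ Y ∩ W = ∅ ∧ Z ∩ W = ∅ ∧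
    (∀ u ∈ X, ∀ v ∈ X, ¬G.Adj u v) ∧ (∀ u ∈ Y, ∀ v ∈ Y, ¬G.Adj u v) ∧
    (∀ u ∈ Z, ∀ v ∈ Z, ¬G.Adj u v) ∧ (∀ u ∈ W, ∀ v ∈ W, ¬G.Adj u v) ∧
    x ∈ X ∧ y ∈ Y ∧
    (∃ x' ∈ X, x' ≠ x) ∧ (∃ y' ∈ Y, y' ≠ y) ∧
    (G.induce (X ∪ Y)).Connected ∧
    (¬∃ f : Fin 5 ↪ V, (∀ i, f i ∈ X ∪ Y) ∧
      ∀ i j, G.Adj (f i) (f j) ↔ path5.Adj i j) ∧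
    (∀ w ∈ W, ∀ v ∈ X ∪ Y ∪ Z, ¬G.Adj w v) ∧
    (∀ v ∈ Y, G.Adj x v) ∧ (∀ v ∈ X, G.Adj y v) ∧
    (∀ z ∈ Z, G.Adj z x ∧ G.Adj z y ∧ ∀ v ∈ X ∪ Y, v ≠ x → v ≠ y → ¬G.Adj z v)

/-- Class C. -/
def InClassC {V : Type*} (G : SimpleGraph V) : Prop :=
  ∃ (X Y : Set V) (x1 x2 y1 y2 : V),
    (∀ v : V, v ∈ X ∨ v ∈ Y) ∧ X ∩ Y = ∅ ∧
    G.IsClique X ∧ G.IsClique Y ∧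
    x1 ∈ X ∧ x2 ∈ X ∧ y1 ∈ Y ∧ y2 ∈ Y ∧ x1 ≠ x2 ∧ y1 ≠ y2 ∧
    (∀ u ∈ X, ∀ v ∈ Y, (G.Adj u v ↔ (u = x1 ∧ v = y1) ∨ (u = x2 ∧ v = y2)))

lemma cycG_adj_iff' {n : ℕ} [NeZero n] (hn : 2 ≤ n) (i j : Fin n) :
    (cycG n).Adj i j ↔ i ≠ j ∧ (i + 1 = j ∨ j + 1 = i) := by
  have h1 : ∀ a b : Fin n, (((a:ℕ) + 1) % n = (b:ℕ)) ↔ a + 1 = b := by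
    intro a b
    rw [Fin.ext_iff, Fin.val_add, Fin.val_one', Nat.mod_eq_of_lt (show 1 < n by omega)]
  simp only [cycG, fromRel_adj, h1]

lemma fin_sum_ones' {n : ℕ} [NeZero n] (hn : 4 ≤ n) :
    ((1:Fin n)).val = 1 ∧ ((1:Fin n) + 1 : Fin n).val = 2 ∧ ((1:Fin n)+1+1+1 : Fin n).val = 4 % n := by
  have e1 : ((1:Fin n)).val = 1 := by
    rw [Fin.val_one', Nat.mod_eq_of_lt (by omega)]
  have e2 : ((1:Fin n) + 1).val = 2 := by
    rw [Fin.val_add, e1, Nat.mod_eq_of_lt (by omega)]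
  have e3 : ((1:Fin n) + 1 + 1).val = 3 := by
    rw [Fin.val_add, e2, e1, Nat.mod_eq_of_lt (by omega)]
  have e4 : ((1:Fin n) + 1 + 1 + 1).val = 4 % n := by rw [Fin.val_add, e3, e1]
  exact ⟨e1, e2, e4⟩

lemma fin_two_ne_zero' {n : ℕ} [NeZero n] (hn : 4 ≤ n) : ((1:Fin n) + 1) ≠ 0 := by
  intro h
  have := (fin_sum_ones' hn).2.1
  rw [h] at this
  simp at this

lemma fin_one_ne_zero' {n : ℕ} [NeZero n] (hn : 4 ≤ n) : (1:Fin n) ≠ 0 := by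
  intro h
  have := (fin_sum_ones' hn).1
  rw [h] at this
  simp at this

lemma fin_four_eq_zero' {n : ℕ} [NeZero n] (hn : 4 ≤ n) (h : (1:Fin n)+1+1+1 = 0) : n = 4 := by
  have h4 := (fin_sum_ones' hn).2.2
  rw [h] at h4
  simp at h4
  rcases Nat.lt_or_ge 4 n with h5 | h5
  · rw [Nat.mod_eq_of_lt h5] at h4; omega
  · omega

lemma fin4_cover : ∀ (ee kk x : Fin 4), ee = 1 ∨ ee = -1 →
    (x = kk ∨ x = kk + ee ∨ x = kk + ee + ee ∨ x = kk - ee) := by decide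



open Fin.CommRing in
lemma hole_eq {V : Type*} {G : SimpleGraph V} {a b c d e : V} {X : Set V}
    (hall : ∀ v : V, v = a ∨ v = b ∨ v = c ∨ v = d ∨ v = e ∨ v ∈ X)
    (hac : a ≠ c)
    (Aab : G.Adj a b) (Abc : G.Adj b c) (Acd : G.Adj c d) (Ada : G.Adj d a)
    (Nac : ¬G.Adj a c) (Nbd : ¬G.Adj b d)
    (hXcl : G.IsClique X)
    (hXadj : ∀ u ∈ X, G.Adj u c ∧ G.Adj u d ∧ ¬G.Adj u a ∧ ¬G.Adj u b)
    (Nea : ¬G.Adj e a) (Neb : ¬G.Adj e b)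
    {s : Set V} (hs : IsHoleSet G s) : s = {a, b, c, d} := by
  obtain ⟨n, hn4, f, hrange, hadj⟩ := hs
  have : NeZero n := ⟨by omega⟩
  have hcyc : ∀ i j : Fin n, G.Adj (f i) (f j) ↔ i ≠ j ∧ (i + 1 = j ∨ j + 1 = i) :=
    fun i j => (hadj i j).trans (cycG_adj_iff' (by omega) i j)
  have h1 : (1:Fin n) ≠ 0 := fin_one_ne_zero' hn4
  have h2 : (1:Fin n) + 1 ≠ 0 := fin_two_ne_zero' hn4
  have haN : ∀ v, G.Adj a v → v = b ∨ v = d := by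
    intro v hv
    rcases hall v with rfl | rfl | rfl | rfl | rfl | hvX
    · exact absurd hv (G.irrefl)
    · exact Or.inl rfl
    · exact absurd hv Nac
    · exact Or.inr rfl
    · exact absurd hv.symm Nea
    · exact absurd hv.symm (hXadj v hvX).2.2.1
  have hbN : ∀ v, G.Adj b v → v = a ∨ v = c := by
    intro v hv
    rcases hall v with rfl | rfl | rfl | rfl | rfl | hvX
    · exact Or.inl rfl
    · exact absurd hv (G.irrefl)
    · exact Or.inr rfl
    · exact absurd hv Nbd
    · exact absurd hv.symm Neb
    · exact absurd hv.symm (hXadj v hvX).2.2.2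
  have hsucc : ∀ k : Fin n, G.Adj (f k) (f (k+1)) := by
    intro k
    refine (hcyc k (k+1)).2 ⟨?_, Or.inl rfl⟩
    intro h; exact h1 (by linear_combination -h)
  have hpred : ∀ k : Fin n, G.Adj (f k) (f (k-1)) := by
    intro k
    refine (hcyc k (k-1)).2 ⟨?_, Or.inr (by ring)⟩
    intro h; exact h1 (by linear_combination h)
  by_cases ha : a ∈ s
  · rw [← hrange] at ha
    obtain ⟨k, hk⟩ := ha
    have hAk1 : G.Adj a (f (k+1)) := by rw [← hk]; exact hsucc k
    have hAk2 : G.Adj a (f (k-1)) := by rw [← hk]; exact hpred k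
    have hne12 : f (k+1) ≠ f (k-1) := by
      intro h
      exact h2 (by linear_combination f.injective h)
    obtain ⟨ε, hε, hbε, hdε⟩ : ∃ ε : Fin n, (ε = 1 ∨ ε = -1) ∧ f (k+ε) = b ∧ f (k-ε) = d := by
      rcases haN _ hAk1 with h1b | h1d
      · rcases haN _ hAk2 with h2b | h2d
        · exact absurd (h1b.trans h2b.symm) hne12
        · exact ⟨1, Or.inl rfl, h1b, h2d⟩
      · rcases haN _ hAk2 with h2b | h2d
        · refine ⟨-1, Or.inr rfl, ?_, ?_⟩
          · have hx : k + -1 = k - 1 := by ring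
            rw [hx]; exact h2b
          · have hx : k - -1 = k + 1 := by ring
            rw [hx]; exact h1d
        · exact absurd (h1d.trans h2d.symm) hne12
    have hAc1 : G.Adj b (f (k+ε+1)) := by rw [← hbε]; exact hsucc (k+ε)
    have hAc2 : G.Adj b (f (k+ε-1)) := by rw [← hbε]; exact hpred (k+ε)
    have hc : f (k+ε+ε) = c := by
      rcases hε with rfl | rfl
      · rcases hbN _ hAc1 with hxa | hxc
        · exfalso
          have hkk := f.injective (hxa.trans hk.symm)
          exact h2 (by linear_combination hkk)
        · exact hxc
      · rcases hbN _ hAc2 with hxa | hxc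
        · exfalso
          have hkk := f.injective (hxa.trans hk.symm)
          exact h2 (by linear_combination -hkk)
        · have hidx : k + -1 + -1 = k + -1 - 1 := by ring
          rw [hidx]; exact hxc
    have hcd' := (hcyc (k+ε+ε) (k-ε)).1 (by rw [hc, hdε]; exact Acd)
    have hn_eq : n = 4 := by
      rcases hε with rfl | rfl
      · rcases hcd'.2 with h | h
        · exact fin_four_eq_zero' hn4 (by linear_combination h)
        · exact absurd (show ((1:Fin n)+1) = 0 by linear_combination -h) h2
      · rcases hcd'.2 with h | h
        · exact absurd (show ((1:Fin n)+1) = 0 by linear_combination -h) h2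
        · exact fin_four_eq_zero' hn4 (by linear_combination h)
    subst hn_eq
    rw [← hrange]
    have huniv : ∀ x : Fin 4, x = k ∨ x = k + ε ∨ x = k + ε + ε ∨ x = k - ε :=
      fun x => fin4_cover ε k x hε
    ext x
    simp only [Set.mem_range, Set.mem_insert_iff, Set.mem_singleton_iff]
    constructor
    · rintro ⟨i, rfl⟩
      rcases huniv i with rfl | rfl | rfl | rfl
      exacts [Or.inl hk, Or.inr (Or.inl hbε), Or.inr (Or.inr (Or.inl hc)),
        Or.inr (Or.inr (Or.inr hdε))]
    · rintro (rfl | rfl | rfl | rfl)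
      exacts [⟨k, hk⟩, ⟨k+ε, hbε⟩, ⟨k+ε+ε, hc⟩, ⟨k-ε, hdε⟩]
  · exfalso
    have hb : b ∉ s := by
      intro hbs
      rw [← hrange] at hbs
      obtain ⟨m, hm⟩ := hbs
      have hA1 : G.Adj b (f (m+1)) := by rw [← hm]; exact hsucc m
      have hA2 : G.Adj b (f (m-1)) := by rw [← hm]; exact hpred m
      have hne' : f (m+1) ≠ f (m-1) := fun h => h2 (by linear_combination f.injective h)
      apply ha
      rw [← hrange]
      rcases hbN _ hA1 with h | h
      · exact ⟨m+1, h⟩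
      · rcases hbN _ hA2 with h' | h'
        · exact ⟨m-1, h'⟩
        · exact absurd (h.trans h'.symm) hne'
    have hmem : ∀ i : Fin n, f i = c ∨ f i = d ∨ f i = e ∨ f i ∈ X := by
      intro i
      have hfs : f i ∈ s := by rw [← hrange]; exact ⟨i, rfl⟩
      rcases hall (f i) with h | h | h | h | h | h
      · exact absurd (h ▸ hfs) ha
      · exact absurd (h ▸ hfs) hb
      · exact Or.inl h
      · exact Or.inr (Or.inl h)
      · exact Or.inr (Or.inr (Or.inl h))
      · exact Or.inr (Or.inr (Or.inr h))
    have hK : ∀ u v : V, (u = c ∨ u = d ∨ u ∈ X) → (v = c ∨ v = d ∨ v ∈ X) → u ≠ v → G.Adj u v := by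
      rintro u v (rfl | rfl | hu) (rfl | rfl | hv) huv
      · exact absurd rfl huv
      · exact Acd
      · exact ((hXadj v hv).1).symm
      · exact Acd.symm
      · exact absurd rfl huv
      · exact ((hXadj v hv).2.1).symm
      · exact (hXadj u hu).1
      · exact (hXadj u hu).2.1
      · exact hXcl hu hv huv
    have h02 : ¬ G.Adj (f ⟨0, by omega⟩) (f ⟨2, by omega⟩) := by
      intro h
      have hx := (hadj _ _).1 h
      rw [cycG, fromRel_adj] at hx
      obtain ⟨-, hx | hx⟩ := hx
      · have hx' : (0 + 1) % n = 2 := hx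
        rw [Nat.mod_eq_of_lt (by omega)] at hx'
        omega
      · have hx' : (2 + 1) % n = 0 := hx
        rw [Nat.mod_eq_of_lt (by omega)] at hx'
        omega
    have h13 : ¬ G.Adj (f ⟨1, by omega⟩) (f ⟨3, by omega⟩) := by
      intro h
      have hx := (hadj _ _).1 h
      rw [cycG, fromRel_adj] at hx
      obtain ⟨-, hx | hx⟩ := hx
      · have hx' : (1 + 1) % n = 3 := hx
        rw [Nat.mod_eq_of_lt (by omega)] at hx'
        omega
      · have hx' : (3 + 1) % n = 1 := hx
        rcases Nat.lt_or_ge 4 n with h5 | h5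
        · rw [Nat.mod_eq_of_lt (by omega)] at hx'
          omega
        · have hn' : n = 4 := by omega
          subst hn'
          omega
    have hinj : ∀ p q : Fin n, (p:ℕ) ≠ (q:ℕ) → f p ≠ f q := by
      intro p q hpq h
      exact hpq (congrArg Fin.val (f.injective h))
    have key2 : ∀ p q : Fin n, f p ≠ f q → ¬G.Adj (f p) (f q) → f p = e ∨ f q = e := by
      intro p q hne hnadjpq
      by_contra hcon
      push_neg at hcon
      obtain ⟨hpe, hqe⟩ := hcon
      have hp' : f p = c ∨ f p = d ∨ f p ∈ X := by
        rcases hmem p with h|h|h|h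
        exacts [Or.inl h, Or.inr (Or.inl h), absurd h hpe, Or.inr (Or.inr h)]
      have hq' : f q = c ∨ f q = d ∨ f q ∈ X := by
        rcases hmem q with h|h|h|h
        exacts [Or.inl h, Or.inr (Or.inl h), absurd h hqe, Or.inr (Or.inr h)]
      exact hnadjpq (hK _ _ hp' hq' hne)
    have e02 := key2 _ _ (hinj ⟨0, by omega⟩ ⟨2, by omega⟩ (show (0:ℕ) ≠ 2 by omega)) h02
    have e13 := key2 _ _ (hinj ⟨1, by omega⟩ ⟨3, by omega⟩ (show (1:ℕ) ≠ 3 by omega)) h13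
    rcases e02 with h|h <;> rcases e13 with h'|h'
    · exact hinj ⟨0, by omega⟩ ⟨1, by omega⟩ (show (0:ℕ) ≠ 1 by omega) (h.trans h'.symm)
    · exact hinj ⟨0, by omega⟩ ⟨3, by omega⟩ (show (0:ℕ) ≠ 3 by omega) (h.trans h'.symm)
    · exact hinj ⟨2, by omega⟩ ⟨1, by omega⟩ (show (2:ℕ) ≠ 1 by omega) (h.trans h'.symm)
    · exact hinj ⟨2, by omega⟩ ⟨3, by omega⟩ (show (2:ℕ) ≠ 3 by omega) (h.trans h'.symm)

lemma hole_exists {V : Type*} {G : SimpleGraph V} {a b c d : V}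
    (hab : a ≠ b) (hac : a ≠ c) (had : a ≠ d) (hbc : b ≠ c) (hbd : b ≠ d) (hcd : c ≠ d)
    (Aab : G.Adj a b) (Abc : G.Adj b c) (Acd : G.Adj c d) (Ada : G.Adj d a)
    (Nac : ¬G.Adj a c) (Nbd : ¬G.Adj b d) :
    IsHoleSet G ({a, b, c, d} : Set V) := by
  have hinj : Function.Injective ![a, b, c, d] := by
    intro i j hij
    fin_cases i <;> fin_cases j <;> simp_all
  refine ⟨4, le_refl 4, ⟨![a,b,c,d], hinj⟩, ?_, ?_⟩
  · ext x
    simp [Matrix.range_cons, Matrix.range_empty, Set.mem_insert_iff]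
    tauto
  · intro i j
    have Aba := Aab.symm
    have Acb := Abc.symm
    have Adc := Acd.symm
    have Aad := Ada.symm
    have Nca : ¬G.Adj c a := fun h => Nac h.symm
    have Ndb : ¬G.Adj d b := fun h => Nbd h.symm
    fin_cases i <;> fin_cases j <;> simp_all [cycG, fromRel_adj] <;> decide

theorem stmt_10 {V : Type*} (G : SimpleGraph V) (hG : InClassA G) :
    (∃! s : Set V, IsHoleSet G s) ∧
    (∀ s : Set V, IsHoleSet G s →
      s.ncard = 4 ∧ ∀ v ∉ s, ({u ∈ s | G.Adj v u}).ncard ≤ 2) ∧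
    ¬ContainsWheel G := by
  obtain ⟨a, b, c, d, e, X, hXne, hall, haX, hbX, hcX, hdX, heX,
    hab, hac, had, hae, hbc, hbd, hbe, hcd, hce, hde,
    Aab, Abc, Acd, Ada, Nac, Nbd, hXcl, hXadj, heXadj, Nea, Neb, Necd⟩ := hG
  have key : ∀ s : Set V, IsHoleSet G s → s = {a, b, c, d} := fun s hs =>
    hole_eq hall hac Aab Abc Acd Ada Nac Nbd hXcl hXadj Nea Neb hs
  have hhole : IsHoleSet G ({a, b, c, d} : Set V) :=
    hole_exists hab hac had hbc hbd hcd Aab Abc Acd Ada Nac Nbd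
  have h4card : ({a, b, c, d} : Set V).ncard = 4 := by
    have h1 : ({d} : Set V).ncard = 1 := Set.ncard_singleton d
    have h2 : ({c, d} : Set V).ncard = 2 := by
      rw [Set.ncard_insert_of_notMem (by simp [hcd]) (Set.toFinite _), h1]
    have h3 : ({b, c, d} : Set V).ncard = 3 := by
      rw [Set.ncard_insert_of_notMem (by simp [hbc, hbd]) (Set.toFinite _), h2]
    rw [Set.ncard_insert_of_notMem (by simp [hab, hac, had]) (Set.toFinite _), h3]
  have hbound : ∀ v ∉ ({a, b, c, d} : Set V),
      ({u ∈ ({a, b, c, d} : Set V) | G.Adj v u}).ncard ≤ 2 := by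
    intro v hv
    have hv' : v = e ∨ v ∈ X := by
      rcases hall v with rfl | rfl | rfl | rfl | rfl | h
      · exact absurd (by simp) hv
      · exact absurd (by simp) hv
      · exact absurd (by simp) hv
      · exact absurd (by simp) hv
      · exact Or.inl rfl
      · exact Or.inr h
    have hsub : {u ∈ ({a, b, c, d} : Set V) | G.Adj v u} ⊆ {c, d} := by
      rintro u ⟨hu, hadjvu⟩
      simp only [Set.mem_insert_iff, Set.mem_singleton_iff] at hu ⊢
      rcases hu with rfl | rfl | rfl | rfl
      · exfalso
        rcases hv' with rfl | h
        · exact Nea hadjvu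
        · exact (hXadj v h).2.2.1 hadjvu
      · exfalso
        rcases hv' with rfl | h
        · exact Neb hadjvu
        · exact (hXadj v h).2.2.2 hadjvu
      · exact Or.inl rfl
      · exact Or.inr rfl
    refine le_trans (Set.ncard_le_ncard hsub (Set.toFinite _)) ?_
    refine le_trans (Set.ncard_insert_le c {d}) ?_
    simp
  refine ⟨⟨{a, b, c, d}, hhole, fun s hs => key s hs⟩, ?_, ?_⟩
  · intro s hs
    rw [key s hs]
    exact ⟨h4card, hbound⟩
  · rintro ⟨n, hn4, f, hub, hhub, hadjw, h3⟩
    have hs : Set.range f = {a, b, c, d} := key _ ⟨n, hn4, f, rfl, hadjw⟩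
    have hub' : hub ∉ ({a, b, c, d} : Set V) := by
      rw [← hs]
      rintro ⟨i, hi⟩
      exact hhub i hi.symm
    have himg : {u ∈ ({a, b, c, d} : Set V) | G.Adj hub u} = f '' {i | G.Adj hub (f i)} := by
      ext u
      constructor
      · rintro ⟨hu, hadju⟩
        rw [← hs] at hu
        obtain ⟨i, rfl⟩ := hu
        exact ⟨i, hadju, rfl⟩
      · rintro ⟨i, hi, rfl⟩
        refine ⟨?_, hi⟩
        rw [← hs]
        exact Set.mem_range_self i
    have hle := hbound hub hub'
    rw [himg, Set.ncard_image_of_injective _ f.injective] at hle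
    omega
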